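/- For g(RE(5,10)) with its induced ℤ-gradation and every integer k ≥ 0: dim g(RE(5,10))_{2k−4} ≤ k(k+1)(k+2)(k+4)/6 and dim g(RE(5,10))_{2k−3} ≤ k(k+2)(k+3)(k+4)/6. -/

import Mathlib

/-!
# Statement 17 (Proposition 6.9: dimension bounds for `g(RE(5,10))`)

The annihilation algebra `g(RE(5,10))` is spanned by the elements `a_{ij} y^M` and
`b_k y^M` (`M ∈ ℤ₊⁵`), subject to the relations
(i) `a_{ij} y^M + a_{ji} y^M = 0`,
(ii) `a_{ij} (∂_{y_h} y^M) + a_{jh} (∂_{y_i} y^M) + a_{hi} (∂_{y_j} y^M) = 0`,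
(iii) `Σ_k b_k (∂_{y_k} y^M) = 0`,
and is ℤ-graded by `deg (a_{ij} y^M) = 2|M| - 4`, `deg (b_k y^M) = 2|M| - 3`.
For every `k ≥ 0`:
`dim g(RE(5,10))_{2k-4} ≤ k(k+1)(k+2)(k+4)/6` and
`dim g(RE(5,10))_{2k-3} ≤ k(k+2)(k+3)(k+4)/6`.
-/

variable (𝔽 : Type) [Field 𝔽] [CharZero 𝔽] [IsAlgClosed 𝔽]

/-- Spanning symbols of `g(RE(5,10))`: `inl (i,j)` is `a_{ij} y^M`, `inr k` is
`b_k y^M`. -/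
abbrev AnnSym := Sum (Fin 5 × Fin 5) (Fin 5) × (Fin 5 →₀ ℕ)

/-- The free vector space on the spanning symbols. -/
abbrev AnnFree (𝔽 : Type) [Field 𝔽] := AnnSym →₀ 𝔽

/-- Relation (i): `a_{ij} y^M + a_{ji} y^M = 0`. -/
noncomputable def relSkew (i j : Fin 5) (M : Fin 5 →₀ ℕ) : AnnFree 𝔽 :=
  Finsupp.single (Sum.inl (i, j), M) 1 + Finsupp.single (Sum.inl (j, i), M) 1

/-- Relation (ii): `a_{ij} ∂_{y_h} y^M + a_{jh} ∂_{y_i} y^M + a_{hi} ∂_{y_j} y^M = 0`. -/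
noncomputable def relCyc (h i j : Fin 5) (M : Fin 5 →₀ ℕ) : AnnFree 𝔽 :=
  (M h : 𝔽) • Finsupp.single (Sum.inl (i, j), M - Finsupp.single h 1) 1 +
    (M i : 𝔽) • Finsupp.single (Sum.inl (j, h), M - Finsupp.single i 1) 1 +
    (M j : 𝔽) • Finsupp.single (Sum.inl (h, i), M - Finsupp.single j 1) 1

/-- Relation (iii): `Σ_k b_k ∂_{y_k} y^M = 0`. -/
noncomputable def relDiv (M : Fin 5 →₀ ℕ) : AnnFree 𝔽 :=
  ∑ k : Fin 5, (M k : 𝔽) • Finsupp.single (Sum.inr k, M - Finsupp.single k 1) 1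

/-- The submodule of relations. -/
noncomputable def annRels : Submodule 𝔽 (AnnFree 𝔽) :=
  Submodule.span 𝔽
    ((Set.range fun x : (Fin 5 × Fin 5) × (Fin 5 →₀ ℕ) => relSkew 𝔽 x.1.1 x.1.2 x.2) ∪
      (Set.range fun x : (Fin 5 × Fin 5 × Fin 5) × (Fin 5 →₀ ℕ) =>
        relCyc 𝔽 x.1.1 x.1.2.1 x.1.2.2 x.2) ∪
      (Set.range fun M : Fin 5 →₀ ℕ => relDiv 𝔽 M))

/-- The annihilation algebra `g(RE(5,10))` (as a graded vector space). -/
abbrev AnnRE (𝔽 : Type) [Field 𝔽] [CharZero 𝔽] [IsAlgClosed 𝔽] :=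
  AnnFree 𝔽 ⧸ annRels 𝔽

/-- The homogeneous component `g(RE(5,10))_{2k-4}`: the span of the classes of the
`a_{ij} y^M` with `|M| = k`. -/
noncomputable def annEvenPiece (k : ℕ) : Submodule 𝔽 (AnnRE 𝔽) :=
  Submodule.span 𝔽
    {x | ∃ (i j : Fin 5) (M : Fin 5 →₀ ℕ), (M.sum fun _ n => n) = k ∧
      x = Submodule.Quotient.mk (Finsupp.single (Sum.inl (i, j), M) 1)}

/-- The homogeneous component `g(RE(5,10))_{2k-3}`: the span of the classes of the
`b_i y^M` with `|M| = k`. -/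
noncomputable def annOddPiece (k : ℕ) : Submodule 𝔽 (AnnRE 𝔽) :=
  Submodule.span 𝔽
    {x | ∃ (i : Fin 5) (M : Fin 5 →₀ ℕ), (M.sum fun _ n => n) = k ∧
      x = Submodule.Quotient.mk (Finsupp.single (Sum.inr i, M) 1)}


open Finsupp Submodule Module LinearMap

set_option maxHeartbeats 1000000
set_option synthInstance.maxHeartbeats 200000

/-- degree of a monomial -/
def mdeg (M : Fin 5 →₀ ℕ) : ℕ := M.sum fun _ n => n

/-- basis monomial `y_h` -/
noncomputable def epsl (h : Fin 5) : Fin 5 →₀ ℕ := Finsupp.single h 1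

lemma mdeg_eq (M : Fin 5 →₀ ℕ) : mdeg M = ∑ l : Fin 5, M l :=
  Finsupp.sum_fintype _ _ (fun _ => rfl)

lemma add_epsl_sub (M : Fin 5 →₀ ℕ) (h : Fin 5) : (M + epsl h) - epsl h = M := by
  ext l; simp [epsl, Finsupp.tsub_apply, Finsupp.single_apply]

lemma add_epsl_apply (M : Fin 5 →₀ ℕ) (h l : Fin 5) :
    (M + epsl h) l = M l + if h = l then 1 else 0 := by
  simp [epsl, Finsupp.single_apply]

lemma sub_add_epsl (M : Fin 5 →₀ ℕ) (i h : Fin 5) (hMi : M i ≠ 0) :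
    (M - epsl i) + epsl h = (M + epsl h) - epsl i := by
  ext l
  simp only [epsl, Finsupp.tsub_apply, Finsupp.add_apply, Finsupp.single_apply]
  rcases eq_or_ne i l with rfl | hne
  · rcases eq_or_ne h i with rfl | h2
    · simp
      omega
    · simp [h2]
  · simp [hne]

lemma mdeg_sub (M : Fin 5 →₀ ℕ) (i : Fin 5) (hMi : M i ≠ 0) :
    mdeg (M - epsl i) = mdeg M - 1 := by
  rw [mdeg_eq, mdeg_eq]
  fin_cases i <;>
    (simp only [Fin.sum_univ_five, epsl, Finsupp.tsub_apply, Finsupp.single_apply] at * <;>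
      simp at * <;> omega)

lemma mdeg_add_epsl (M : Fin 5 →₀ ℕ) (h : Fin 5) : mdeg (M + epsl h) = mdeg M + 1 := by
  rw [mdeg_eq, mdeg_eq]
  fin_cases h <;>
    (simp only [Fin.sum_univ_five, epsl, Finsupp.add_apply, Finsupp.single_apply] <;>
      simp <;> omega)

/-! counting monomials -/

noncomputable def monEquiv (d : ℕ) : {N : Fin 5 →₀ ℕ // mdeg N = d} ≃ Sym (Fin 5) d :=
  Equiv.subtypeEquiv Multiset.toFinsupp.toEquiv.symm
    (fun N => by
      show mdeg N = d ↔ Multiset.card (Multiset.toFinsupp.toEquiv.symm N) = d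
      rw [show (Multiset.toFinsupp.toEquiv.symm N : Multiset (Fin 5)) = Finsupp.toMultiset N from
        rfl, Finsupp.card_toMultiset]
      rfl)

noncomputable instance monFintype (d : ℕ) : Fintype {N : Fin 5 →₀ ℕ // mdeg N = d} :=
  Fintype.ofEquiv _ (monEquiv d).symm

lemma mon_card (d : ℕ) :
    Fintype.card {N : Fin 5 →₀ ℕ // mdeg N = d} = (d + 4).choose 4 := by
  rw [Fintype.card_congr (monEquiv d), Sym.card_sym_eq_choose, Fintype.card_fin]
  rw [show 5 + d - 1 = d + 4 from by omega]
  rw [show (d + 4).choose d = (d + 4).choose (d + 4 - d) from (Nat.choose_symm (by omega)).symm]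
  congr 1
  omega

/-! membership of relations -/

lemma relSkew_mem (i j : Fin 5) (M : Fin 5 →₀ ℕ) : relSkew 𝔽 i j M ∈ annRels 𝔽 :=
  Submodule.subset_span (Set.mem_union_left _ (Set.mem_union_left _ ⟨((i, j), M), rfl⟩))

lemma relCyc_mem (h i j : Fin 5) (M : Fin 5 →₀ ℕ) : relCyc 𝔽 h i j M ∈ annRels 𝔽 :=
  Submodule.subset_span (Set.mem_union_left _ (Set.mem_union_right _ ⟨((h, i, j), M), rfl⟩))

lemma relDiv_mem (M : Fin 5 →₀ ℕ) : relDiv 𝔽 M ∈ annRels 𝔽 :=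
  Submodule.subset_span (Set.mem_union_right _ ⟨M, rfl⟩)

/-! auxiliary linear maps -/

abbrev V1 (𝔽 : Type) [Field 𝔽] := (Fin 5 × (Fin 5 →₀ ℕ)) →₀ 𝔽
abbrev V0 (𝔽 : Type) [Field 𝔽] := (Fin 5 →₀ ℕ) →₀ 𝔽

/-- basis element of `AnnFree` in the `a`-sector -/
noncomputable def eA (i j : Fin 5) (M : Fin 5 →₀ ℕ) : AnnFree 𝔽 :=
  Finsupp.single (Sum.inl (i, j), M) 1

/-- basis element of `AnnFree` in the `b`-sector -/
noncomputable def eB (i : Fin 5) (M : Fin 5 →₀ ℕ) : AnnFree 𝔽 :=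
  Finsupp.single (Sum.inr i, M) 1

/-- transpose of the codifferential `δ : Ω² → Ω¹` -/
noncomputable def H2 : V1 𝔽 →ₗ[𝔽] AnnFree 𝔽 :=
  Finsupp.lsum 𝔽 fun p => LinearMap.toSpanSingleton 𝔽 _
    (∑ h : Fin 5, Finsupp.single (Sum.inl (h, p.1), p.2 + epsl h) (1 : 𝔽))

/-- transpose of `ξ∧ : Ω⁰ → Ω¹` -/
noncomputable def Psi2 : V1 𝔽 →ₗ[𝔽] V0 𝔽 :=
  Finsupp.lsum 𝔽 fun p => LinearMap.toSpanSingleton 𝔽 _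
    ((p.2 p.1 : 𝔽) • Finsupp.single (p.2 - epsl p.1) (1 : 𝔽))

/-- detector of the divergence relations -/
noncomputable def Todd : AnnFree 𝔽 →ₗ[𝔽] V0 𝔽 :=
  Finsupp.lsum 𝔽 fun s => LinearMap.toSpanSingleton 𝔽 _
    (Sum.elim (fun _ => (0 : V0 𝔽)) (fun j => Finsupp.single (s.2 + epsl j) 1) s.1)

/-- the image of `a_{ij} y^M` under the transpose of `ξ∧ : Ω¹ → Ω²` -/
noncomputable def psiV (i j : Fin 5) (M : Fin 5 →₀ ℕ) : V1 𝔽 :=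
  (M i : 𝔽) • Finsupp.single (j, M - epsl i) 1 - (M j : 𝔽) • Finsupp.single (i, M - epsl j) 1

@[simp] lemma H2_single (l : Fin 5) (N : Fin 5 →₀ ℕ) (c : 𝔽) :
    H2 𝔽 (Finsupp.single (l, N) c)
      = c • ∑ h : Fin 5, Finsupp.single (Sum.inl (h, l), N + epsl h) (1 : 𝔽) := by
  simp [H2, Finsupp.lsum_single, LinearMap.toSpanSingleton_apply]

@[simp] lemma Psi2_single (l : Fin 5) (N : Fin 5 →₀ ℕ) (c : 𝔽) :
    Psi2 𝔽 (Finsupp.single (l, N) c)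
      = c • ((N l : 𝔽) • Finsupp.single (N - epsl l) (1 : 𝔽)) := by
  simp [Psi2, Finsupp.lsum_single, LinearMap.toSpanSingleton_apply]

@[simp] lemma Todd_singleA (i j : Fin 5) (M : Fin 5 →₀ ℕ) (c : 𝔽) :
    Todd 𝔽 (Finsupp.single (Sum.inl (i, j), M) c) = 0 := by
  simp [Todd, Finsupp.lsum_single, LinearMap.toSpanSingleton_apply]

@[simp] lemma Todd_singleB (j : Fin 5) (N : Fin 5 →₀ ℕ) (c : 𝔽) :
    Todd 𝔽 (Finsupp.single (Sum.inr j, N) c) = c • Finsupp.single (N + epsl j) (1 : 𝔽) := by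
  simp [Todd, Finsupp.lsum_single, LinearMap.toSpanSingleton_apply]

/-! the contracting-homotopy identity -/

lemma key_identity (i j : Fin 5) (M : Fin 5 →₀ ℕ) :
    ((mdeg M : 𝔽) + 3) • eA 𝔽 i j M
      = (∑ h : Fin 5, relCyc 𝔽 h i j (M + epsl h)) + H2 𝔽 (psiV 𝔽 i j M)
        - (2 : 𝔽) • relSkew 𝔽 i j M
        - (M i : 𝔽) • ∑ h : Fin 5, relSkew 𝔽 j h ((M + epsl h) - epsl i) := by
  set A1 : AnnFree 𝔽 := ∑ h : Fin 5, Finsupp.single (Sum.inl (j, h), (M + epsl h) - epsl i) 1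
    with hA1
  set A2 : AnnFree 𝔽 := ∑ h : Fin 5, Finsupp.single (Sum.inl (h, j), (M + epsl h) - epsl i) 1
    with hA2
  set A3 : AnnFree 𝔽 := ∑ h : Fin 5, Finsupp.single (Sum.inl (h, i), (M + epsl h) - epsl j) 1
    with hA3
  have hswap : ∀ (r s : Fin 5) (x : Fin 5 × Fin 5),
      (M r : 𝔽) • (Finsupp.single (Sum.inl x, (M - epsl r) + epsl s) (1:𝔽) : AnnFree 𝔽)
        = (M r : 𝔽) • (Finsupp.single (Sum.inl x, (M + epsl s) - epsl r) (1:𝔽) : AnnFree 𝔽) := by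
    intro r s x
    by_cases hMr : M r = 0
    · simp [hMr]
    · rw [sub_add_epsl M r s hMr]
  have hH : H2 𝔽 (psiV 𝔽 i j M) = (M i : 𝔽) • A2 - (M j : 𝔽) • A3 := by
    rw [psiV, map_sub, map_smul, map_smul, H2_single, H2_single, one_smul, one_smul,
      hA2, hA3]
    congr 1
    · rw [Finset.smul_sum, Finset.smul_sum]
      exact Finset.sum_congr rfl fun h _ => hswap i h (h, j)
    · rw [Finset.smul_sum, Finset.smul_sum]
      exact Finset.sum_congr rfl fun h _ => hswap j h (h, i)
  have hsk : ∑ h : Fin 5, relSkew 𝔽 j h ((M + epsl h) - epsl i) = A1 + A2 := by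
    rw [hA1, hA2, ← Finset.sum_add_distrib]
    exact Finset.sum_congr rfl fun h _ => rfl
  have hcyc : ∑ h : Fin 5, relCyc 𝔽 h i j (M + epsl h)
      = (((mdeg M : 𝔽) + 5) • eA 𝔽 i j M + eA 𝔽 j i M + eA 𝔽 j i M)
        + ((M i : 𝔽) • A1 + (M j : 𝔽) • A3) := by
    have expand : ∀ h : Fin 5, relCyc 𝔽 h i j (M + epsl h)
        = (((M h : 𝔽) + 1) • eA 𝔽 i j M
            + (if h = i then Finsupp.single (Sum.inl (j, h), (M + epsl h) - epsl i) (1:𝔽)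
              else 0)
            + (if h = j then Finsupp.single (Sum.inl (h, i), (M + epsl h) - epsl j) (1:𝔽)
              else 0))
          + ((M i : 𝔽) • Finsupp.single (Sum.inl (j, h), (M + epsl h) - epsl i) 1
            + (M j : 𝔽) • Finsupp.single (Sum.inl (h, i), (M + epsl h) - epsl j) 1) := by
      intro h
      rw [relCyc, eA]
      rw [show (M + epsl h) - Finsupp.single h 1 = M from add_epsl_sub M h]
      rw [show ((M + epsl h) h : 𝔽) = (M h : 𝔽) + 1 from by
        rw [add_epsl_apply]; simp]
      rw [show (M + epsl h) - Finsupp.single i 1 = (M + epsl h) - epsl i from rfl]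
      rw [show (M + epsl h) - Finsupp.single j 1 = (M + epsl h) - epsl j from rfl]
      rw [show ((M + epsl h) i : 𝔽) = (M i : 𝔽) + (if h = i then (1:𝔽) else 0) from by
        rw [add_epsl_apply]; push_cast; split_ifs <;> simp]
      rw [show ((M + epsl h) j : 𝔽) = (M j : 𝔽) + (if h = j then (1:𝔽) else 0) from by
        rw [add_epsl_apply]; push_cast; split_ifs <;> simp]
      split_ifs <;> module
    rw [Finset.sum_congr rfl fun h _ => expand h]
    rw [Finset.sum_add_distrib, Finset.sum_add_distrib, Finset.sum_add_distrib,
      Finset.sum_add_distrib]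
    congr 1
    · congr 1
      · congr 1
        · rw [← Finset.sum_smul]
          congr 1
          rw [Finset.sum_add_distrib]
          simp [mdeg_eq, Finset.card_univ]
        · rw [Finset.sum_ite_eq' Finset.univ i
            (fun h => Finsupp.single (Sum.inl (j, h), (M + epsl h) - epsl i) (1:𝔽))]
          simp [eA, add_epsl_sub]
      · rw [Finset.sum_ite_eq' Finset.univ j
          (fun h => Finsupp.single (Sum.inl (h, i), (M + epsl h) - epsl j) (1:𝔽))]
        simp [eA, add_epsl_sub]
    · rw [← Finset.smul_sum, ← Finset.smul_sum, hA1, hA3]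
  rw [hcyc, hH, hsk, relSkew, eA, eA]
  module

lemma Psi2_psiV (i j : Fin 5) (M : Fin 5 →₀ ℕ) : Psi2 𝔽 (psiV 𝔽 i j M) = 0 := by
  by_cases hij : i = j
  · subst hij; simp [psiV]
  · rw [psiV, map_sub, map_smul, map_smul, Psi2_single, Psi2_single, one_smul, one_smul]
    rw [show (M - epsl i) j = M j from by
      simp only [epsl, Finsupp.tsub_apply, Finsupp.single_apply, if_neg hij]; omega]
    rw [show (M - epsl j) i = M i from by
      simp only [epsl, Finsupp.tsub_apply, Finsupp.single_apply,
        if_neg (Ne.symm hij)]; omega]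
    rw [show (M - epsl i) - epsl j = (M - epsl j) - epsl i from by
      ext l; simp [epsl, Finsupp.tsub_apply, Finsupp.single_apply]; omega]
    rw [smul_smul, smul_smul, mul_comm]
    exact sub_self _

/-- span of the degree-`d` symbols in `V1` -/
noncomputable def Wsp (d : ℕ) : Submodule 𝔽 (V1 𝔽) :=
  Submodule.span 𝔽 (Set.range fun p : Fin 5 × {N : Fin 5 →₀ ℕ // mdeg N = d} =>
    Finsupp.single (p.1, p.2.1) (1 : 𝔽))

lemma psiV_mem_W (i j : Fin 5) (M : Fin 5 →₀ ℕ) (k : ℕ) (hM : mdeg M = k) :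
    psiV 𝔽 i j M ∈ Wsp 𝔽 (k - 1) := by
  apply sub_mem
  · by_cases hMi : M i = 0
    · simp [hMi]
    · exact Submodule.smul_mem _ _ (Submodule.subset_span
        ⟨(j, ⟨M - epsl i, by rw [mdeg_sub M i hMi, hM]⟩), rfl⟩)
  · by_cases hMj : M j = 0
    · simp [hMj]
    · exact Submodule.smul_mem _ _ (Submodule.subset_span
        ⟨(i, ⟨M - epsl j, by rw [mdeg_sub M j hMj, hM]⟩), rfl⟩)

lemma even_le (k : ℕ) :
    annEvenPiece 𝔽 k
      ≤ Submodule.map ((annRels 𝔽).mkQ ∘ₗ H2 𝔽) (Wsp 𝔽 (k - 1) ⊓ LinearMap.ker (Psi2 𝔽)) := by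
  rw [annEvenPiece]
  rw [Submodule.span_le]
  rintro x ⟨i, j, M, hM, rfl⟩
  have hMk : mdeg M = k := hM
  refine ⟨((k : 𝔽) + 3)⁻¹ • psiV 𝔽 i j M,
    ⟨Submodule.smul_mem _ _ (psiV_mem_W 𝔽 i j M k hMk),
     Submodule.smul_mem _ _ (by simp [LinearMap.mem_ker, Psi2_psiV])⟩, ?_⟩
  have hnz : ((k : 𝔽) + 3) ≠ 0 := by
    have : ((k : 𝔽) + 3) = ((k + 3 : ℕ) : 𝔽) := by push_cast; ring
    rw [this]
    exact Nat.cast_ne_zero.2 (by omega)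
  have hq := congrArg (annRels 𝔽).mkQ (key_identity 𝔽 i j M)
  rw [hMk] at hq
  rw [map_smul, map_sub, map_sub, map_add, map_smul, map_smul] at hq
  rw [show (annRels 𝔽).mkQ (∑ h : Fin 5, relCyc 𝔽 h i j (M + epsl h)) = 0 from
    (Submodule.Quotient.mk_eq_zero _).2 (Submodule.sum_mem _ fun h _ => relCyc_mem 𝔽 h i j _)]
    at hq
  rw [show (annRels 𝔽).mkQ (relSkew 𝔽 i j M) = 0 from
    (Submodule.Quotient.mk_eq_zero _).2 (relSkew_mem 𝔽 i j M)] at hq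
  rw [show (annRels 𝔽).mkQ (∑ h : Fin 5, relSkew 𝔽 j h ((M + epsl h) - epsl i)) = 0 from
    (Submodule.Quotient.mk_eq_zero _).2
      (Submodule.sum_mem _ fun h _ => relSkew_mem 𝔽 j h _)] at hq
  rw [smul_zero, smul_zero, sub_zero, sub_zero, zero_add] at hq
  rw [LinearMap.comp_apply, map_smul, map_smul, ← hq, smul_smul, inv_mul_cancel₀ hnz, one_smul,
    Submodule.mkQ_apply, eA]

instance Wsp_findim (d : ℕ) : FiniteDimensional 𝔽 (Wsp 𝔽 d) :=
  FiniteDimensional.span_of_finite 𝔽 (Set.finite_range _)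

lemma finrank_Wsp_le (d : ℕ) : finrank 𝔽 (Wsp 𝔽 d) ≤ 5 * ((d + 4).choose 4) := by
  classical
  haveI : Fintype ↥(Set.range fun p : Fin 5 × {N : Fin 5 →₀ ℕ // mdeg N = d} =>
      (Finsupp.single (p.1, p.2.1) (1 : 𝔽) : V1 𝔽)) :=
    Set.Finite.fintype (Set.finite_range _)
  refine le_trans (finrank_span_le_card _) ?_
  rw [Set.toFinset_range]
  refine le_trans (Finset.card_image_le) ?_
  simp [Fintype.card_prod, mon_card]

lemma li_singles (d : ℕ) :
    LinearIndependent 𝔽 fun P : {N : Fin 5 →₀ ℕ // mdeg N = d} =>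
      (Finsupp.single P.1 (1 : 𝔽) : V0 𝔽) := by
  have h := (Finsupp.basisSingleOne (ι := Fin 5 →₀ ℕ) (R := 𝔽)).linearIndependent
  have := h.comp (fun P : {N : Fin 5 →₀ ℕ // mdeg N = d} => P.1) Subtype.val_injective
  simpa [Function.comp_def, Finsupp.coe_basisSingleOne] using this

lemma finrank_span_singles (d : ℕ) :
    finrank 𝔽 (Submodule.span 𝔽 (Set.range fun P : {N : Fin 5 →₀ ℕ // mdeg N = d} =>
      (Finsupp.single P.1 (1 : 𝔽) : V0 𝔽))) = (d + 4).choose 4 := by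
  rw [finrank_span_eq_card (li_singles 𝔽 d), mon_card]

lemma even_bound (k : ℕ) (hk : 2 ≤ k) :
    finrank 𝔽 (annEvenPiece 𝔽 k) + (k + 2).choose 4 ≤ 5 * ((k + 3).choose 4) := by
  classical
  set W := Wsp 𝔽 (k - 1) with hW
  letI : AddCommGroup ↥W := inferInstance
  letI : Module 𝔽 ↥W := inferInstance
  letI : FiniteDimensional 𝔽 ↥W := Wsp_findim 𝔽 (k - 1)
  set dr := (Psi2 𝔽).domRestrict W with hdr
  have rn : finrank 𝔽 (LinearMap.range dr) + finrank 𝔽 (LinearMap.ker dr) = finrank 𝔽 W :=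
    LinearMap.finrank_range_add_finrank_ker dr
  -- upper bound for the piece
  have hD : finrank 𝔽 (annEvenPiece 𝔽 k) ≤ finrank 𝔽 (LinearMap.ker dr) := by
    set D := W ⊓ LinearMap.ker (Psi2 𝔽) with hDdef
    haveI : FiniteDimensional 𝔽 D := Submodule.finiteDimensional_of_le inf_le_left
    haveI : FiniteDimensional 𝔽
        (Submodule.map ((annRels 𝔽).mkQ ∘ₗ H2 𝔽) D) := Module.Finite.map _ _
    refine le_trans (Submodule.finrank_mono (even_le 𝔽 k)) ?_
    refine le_trans (Submodule.finrank_map_le _ _) ?_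
    have hker : LinearMap.ker dr = Submodule.comap W.subtype (LinearMap.ker (Psi2 𝔽)) :=
      LinearMap.ker_domRestrict W (Psi2 𝔽)
    have hmap : Submodule.map W.subtype (LinearMap.ker dr) = D := by
      rw [hker, Submodule.map_comap_subtype]
    have heq : Wsp 𝔽 (k - 1) ⊓ LinearMap.ker (Psi2 𝔽)
        = Submodule.map W.subtype (LinearMap.ker dr) := by rw [hmap, hDdef]
    rw [heq]
    exact Submodule.finrank_map_le _ _
  -- lower bound for the range
  have hR : (k + 2).choose 4 ≤ finrank 𝔽 (LinearMap.range dr) := by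
    have hle : Submodule.span 𝔽 (Set.range fun P : {N : Fin 5 →₀ ℕ // mdeg N = k - 2} =>
        (Finsupp.single P.1 (1 : 𝔽) : V0 𝔽)) ≤ LinearMap.range dr := by
      rw [Submodule.span_le]
      rintro x ⟨P, rfl⟩
      rw [hdr, LinearMap.range_domRestrict]
      have hnz : ((P.1 0 + 1 : ℕ) : 𝔽) ≠ 0 := Nat.cast_ne_zero.2 (by omega)
      refine ⟨((P.1 0 + 1 : ℕ) : 𝔽)⁻¹ • Finsupp.single ((0 : Fin 5), P.1 + epsl 0) (1 : 𝔽),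
        Submodule.smul_mem _ _ (Submodule.subset_span
          ⟨((0 : Fin 5), ⟨P.1 + epsl 0, by rw [mdeg_add_epsl, P.2]; omega⟩), rfl⟩), ?_⟩
      rw [map_smul, Psi2_single, one_smul]
      rw [show ((P.1 + epsl 0) 0) = P.1 0 + 1 from by rw [add_epsl_apply]; simp]
      rw [add_epsl_sub]
      rw [smul_smul, inv_mul_cancel₀ (by exact_mod_cast hnz), one_smul]
    have := Submodule.finrank_mono hle
    rw [finrank_span_singles] at this
    rw [show k - 2 + 4 = k + 2 from by omega] at this
    exact this
  have hWle : finrank 𝔽 W ≤ 5 * ((k + 3).choose 4) := by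
    have := finrank_Wsp_le 𝔽 (k - 1)
    rw [show k - 1 + 4 = k + 3 from by omega] at this
    exact this
  omega

lemma sub_add_cancel_epsl (M : Fin 5 →₀ ℕ) (j : Fin 5) (hj : M j ≠ 0) :
    (M - epsl j) + epsl j = M := by
  ext l
  simp only [epsl, Finsupp.tsub_apply, Finsupp.add_apply, Finsupp.single_apply]
  rcases eq_or_ne j l with rfl | hne
  · simp; omega
  · simp [hne]

/-- span of the degree-`k` symbols in the `b`-sector -/
noncomputable def WB (k : ℕ) : Submodule 𝔽 (AnnFree 𝔽) :=
  Submodule.span 𝔽 (Set.range fun p : Fin 5 × {M : Fin 5 →₀ ℕ // mdeg M = k} =>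
    eB 𝔽 p.1 p.2.1)

instance WB_findim (k : ℕ) : FiniteDimensional 𝔽 (WB 𝔽 k) :=
  FiniteDimensional.span_of_finite 𝔽 (Set.finite_range _)

lemma finrank_WB_le (k : ℕ) : finrank 𝔽 (WB 𝔽 k) ≤ 5 * ((k + 4).choose 4) := by
  classical
  haveI : Fintype ↥(Set.range fun p : Fin 5 × {M : Fin 5 →₀ ℕ // mdeg M = k} =>
      eB 𝔽 p.1 p.2.1) := Set.Finite.fintype (Set.finite_range _)
  refine le_trans (finrank_span_le_card _) ?_
  rw [Set.toFinset_range]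
  refine le_trans (Finset.card_image_le) ?_
  simp [Fintype.card_prod, mon_card]

lemma odd_eq (k : ℕ) : annOddPiece 𝔽 k = Submodule.map (annRels 𝔽).mkQ (WB 𝔽 k) := by
  rw [annOddPiece, WB, Submodule.map_span]
  congr 1
  ext x
  constructor
  · rintro ⟨i, M, hM, rfl⟩
    exact ⟨eB 𝔽 i M, ⟨(i, ⟨M, hM⟩), rfl⟩, rfl⟩
  · rintro ⟨y, ⟨⟨i, M⟩, rfl⟩, rfl⟩
    exact ⟨i, M.1, M.2, rfl⟩

lemma relDiv_mem_WB (k : ℕ) (M : Fin 5 →₀ ℕ) (hM : mdeg M = k + 1) :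
    relDiv 𝔽 M ∈ WB 𝔽 k := by
  rw [relDiv]
  refine Submodule.sum_mem _ fun j _ => ?_
  by_cases hj : M j = 0
  · simp [hj]
  · exact Submodule.smul_mem _ _ (Submodule.subset_span
      ⟨(j, ⟨M - epsl j, by rw [mdeg_sub M j hj, hM]; omega⟩), rfl⟩)

lemma Todd_relDiv (M : Fin 5 →₀ ℕ) :
    Todd 𝔽 (relDiv 𝔽 M) = ((mdeg M : ℕ) : 𝔽) • Finsupp.single M (1 : 𝔽) := by
  rw [relDiv, map_sum]
  have hterm : ∀ j : Fin 5,
      Todd 𝔽 ((M j : 𝔽) • Finsupp.single (Sum.inr j, M - Finsupp.single j 1) (1 : 𝔽))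
        = (M j : 𝔽) • Finsupp.single M (1 : 𝔽) := by
    intro j
    rw [show (M - Finsupp.single j 1 : Fin 5 →₀ ℕ) = M - epsl j from rfl,
      map_smul, Todd_singleB, one_smul]
    by_cases hj : M j = 0
    · simp [hj]
    · rw [sub_add_cancel_epsl M j hj]
  rw [Finset.sum_congr rfl fun j _ => hterm j, ← Finset.sum_smul]
  congr 1
  rw [mdeg_eq]
  push_cast
  rfl

lemma odd_bound (k : ℕ) :
    finrank 𝔽 (annOddPiece 𝔽 k) + (k + 5).choose 4 ≤ 5 * ((k + 4).choose 4) := by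
  classical
  set W := WB 𝔽 k with hW
  letI : AddCommGroup ↥W := inferInstance
  letI : Module 𝔽 ↥W := inferInstance
  letI : FiniteDimensional 𝔽 ↥W := WB_findim 𝔽 k
  set dr := (annRels 𝔽).mkQ.domRestrict W with hdr
  have rn : finrank 𝔽 (LinearMap.range dr) + finrank 𝔽 (LinearMap.ker dr) = finrank 𝔽 W :=
    LinearMap.finrank_range_add_finrank_ker dr
  have hpiece : finrank 𝔽 (annOddPiece 𝔽 k) = finrank 𝔽 (LinearMap.range dr) := by
    rw [odd_eq, hdr, LinearMap.range_domRestrict]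
  set Rel := Submodule.span 𝔽
    (Set.range fun M : {M : Fin 5 →₀ ℕ // mdeg M = k + 1} => relDiv 𝔽 M.1) with hRel
  have hRelW : Rel ≤ W := by
    rw [hRel, Submodule.span_le]
    rintro x ⟨M, rfl⟩
    exact relDiv_mem_WB 𝔽 k M.1 M.2
  haveI : FiniteDimensional 𝔽 Rel := Submodule.finiteDimensional_of_le hRelW
  have hlow : (k + 5).choose 4 ≤ finrank 𝔽 Rel := by
    have hle : Submodule.span 𝔽 (Set.range fun M : {M : Fin 5 →₀ ℕ // mdeg M = k + 1} =>
        (Finsupp.single M.1 (1 : 𝔽) : V0 𝔽)) ≤ Submodule.map (Todd 𝔽) Rel := by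
      rw [Submodule.span_le]
      rintro x ⟨M, rfl⟩
      have hnz : ((k + 1 : ℕ) : 𝔽) ≠ 0 := Nat.cast_ne_zero.2 (by omega)
      refine ⟨((k + 1 : ℕ) : 𝔽)⁻¹ • relDiv 𝔽 M.1,
        Submodule.smul_mem _ _ (Submodule.subset_span ⟨M, rfl⟩), ?_⟩
      rw [map_smul, Todd_relDiv, M.2, smul_smul, inv_mul_cancel₀ hnz, one_smul]
    haveI : FiniteDimensional 𝔽 (Submodule.map (Todd 𝔽) Rel) := Module.Finite.map _ _
    have h1 := Submodule.finrank_mono hle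
    rw [finrank_span_singles] at h1
    rw [show k + 1 + 4 = k + 5 from by omega] at h1
    exact le_trans h1 (Submodule.finrank_map_le _ _)
  have hmid : finrank 𝔽 Rel ≤ finrank 𝔽 (LinearMap.ker dr) := by
    have hker : LinearMap.ker dr = Submodule.comap W.subtype (LinearMap.ker (annRels 𝔽).mkQ) :=
      LinearMap.ker_domRestrict W _
    have hsub : Submodule.comap W.subtype Rel ≤ LinearMap.ker dr := by
      rw [hker]
      refine Submodule.comap_mono ?_
      rw [Submodule.ker_mkQ]
      rw [hRel, Submodule.span_le]
      rintro x ⟨M, rfl⟩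
      exact relDiv_mem 𝔽 M.1
    have hmapeq : Submodule.map W.subtype (Submodule.comap W.subtype Rel) = Rel := by
      rw [Submodule.map_comap_subtype]
      exact inf_eq_right.2 hRelW
    calc finrank 𝔽 Rel = finrank 𝔽 (Submodule.map W.subtype (Submodule.comap W.subtype Rel)) :=
          by rw [hmapeq]
      _ ≤ finrank 𝔽 (Submodule.comap W.subtype Rel) := Submodule.finrank_map_le _ _
      _ ≤ finrank 𝔽 (LinearMap.ker dr) := Submodule.finrank_mono hsub
  have hWle : finrank 𝔽 W ≤ 5 * ((k + 4).choose 4) := finrank_WB_le 𝔽 k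
  omega

lemma choose4 (n : ℕ) : 24 * ((n + 4).choose 4) = (n + 1) * (n + 2) * (n + 3) * (n + 4) := by
  have hdf : (n + 4).descFactorial 4 = (n + 1) * (n + 2) * (n + 3) * (n + 4) := by
    have e1 : n + 4 - 3 = n + 1 := by omega
    have e2 : n + 4 - 2 = n + 2 := by omega
    have e3 : n + 4 - 1 = n + 3 := by omega
    simp only [Nat.descFactorial_succ, Nat.descFactorial_zero, Nat.sub_zero, e1, e2, e3]
    ring
  have hdvd : Nat.factorial 4 ∣ (n + 4).descFactorial 4 := Nat.factorial_dvd_descFactorial _ _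
  rw [Nat.choose_eq_descFactorial_div_factorial]
  rw [show Nat.factorial 4 = 24 from rfl] at hdvd ⊢
  rw [Nat.mul_div_cancel' hdvd, hdf]

lemma num_odd (k X : ℕ) (h : X + (k + 5).choose 4 ≤ 5 * ((k + 4).choose 4)) :
    X ≤ k * (k + 2) * (k + 3) * (k + 4) / 6 := by
  rw [Nat.le_div_iff_mul_le (by norm_num : 0 < 6)]
  have h24 : 24 * X + 24 * ((k + 5).choose 4) ≤ 24 * (5 * ((k + 4).choose 4)) := by
    calc 24 * X + 24 * ((k + 5).choose 4) = 24 * (X + (k + 5).choose 4) := by ring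
      _ ≤ _ := Nat.mul_le_mul_left _ h
  have c1 : 24 * ((k + 5).choose 4) = (k + 2) * (k + 3) * (k + 4) * (k + 5) := by
    have := choose4 (k + 1)
    rw [show k + 1 + 4 = k + 5 from by omega] at this
    rw [this]
    try ring
  have key : 24 * (5 * ((k + 4).choose 4))
      = (k + 2) * (k + 3) * (k + 4) * (k + 5) + 4 * (k * (k + 2) * (k + 3) * (k + 4)) := by
    rw [show 24 * (5 * ((k + 4).choose 4)) = 5 * (24 * ((k + 4).choose 4)) from by ring,
      choose4 k]
    ring
  rw [c1, key] at h24
  set P := k * (k + 2) * (k + 3) * (k + 4) with hP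
  set Q := (k + 2) * (k + 3) * (k + 4) * (k + 5) with hQ
  omega

lemma num_even (m X : ℕ) (h : X + (m + 4).choose 4 ≤ 5 * ((m + 5).choose 4)) :
    X ≤ (m + 2) * (m + 3) * (m + 4) * (m + 6) / 6 := by
  rw [Nat.le_div_iff_mul_le (by norm_num : 0 < 6)]
  have h24 : 24 * X + 24 * ((m + 4).choose 4) ≤ 24 * (5 * ((m + 5).choose 4)) := by
    calc 24 * X + 24 * ((m + 4).choose 4) = 24 * (X + (m + 4).choose 4) := by ring
      _ ≤ _ := Nat.mul_le_mul_left _ h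
  have c1 : 24 * ((m + 5).choose 4) = (m + 2) * (m + 3) * (m + 4) * (m + 5) := by
    have := choose4 (m + 1)
    rw [show m + 1 + 4 = m + 5 from by omega] at this
    rw [this]
    try ring
  have key : 24 * (5 * ((m + 5).choose 4))
      = (m + 1) * (m + 2) * (m + 3) * (m + 4)
        + 4 * ((m + 2) * (m + 3) * (m + 4) * (m + 6)) := by
    rw [show 24 * (5 * ((m + 5).choose 4)) = 5 * (24 * ((m + 5).choose 4)) from by ring, c1]
    ring
  rw [choose4 m, key] at h24
  set P := (m + 2) * (m + 3) * (m + 4) * (m + 6) with hP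
  set Q := (m + 1) * (m + 2) * (m + 3) * (m + 4) with hQ
  omega

lemma even_weak (k : ℕ) : finrank 𝔽 (annEvenPiece 𝔽 k) ≤ finrank 𝔽 (Wsp 𝔽 (k - 1)) := by
  classical
  set D := Wsp 𝔽 (k - 1) ⊓ LinearMap.ker (Psi2 𝔽) with hD
  haveI : FiniteDimensional 𝔽 D := Submodule.finiteDimensional_of_le inf_le_left
  haveI : FiniteDimensional 𝔽 (Submodule.map ((annRels 𝔽).mkQ ∘ₗ H2 𝔽) D) :=
    Module.Finite.map _ _
  refine le_trans (Submodule.finrank_mono (even_le 𝔽 k)) ?_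
  refine le_trans (Submodule.finrank_map_le _ _) ?_
  exact Submodule.finrank_mono inf_le_left

lemma annEven_zero : annEvenPiece 𝔽 0 = ⊥ := by
  rw [annEvenPiece, Submodule.span_eq_bot]
  rintro x ⟨i, j, M, hM, rfl⟩
  have hM0 : M = 0 := by
    ext l
    have h2 : mdeg M = 0 := hM
    rw [mdeg_eq] at h2
    have := Finset.sum_eq_zero_iff.1 h2 l (Finset.mem_univ l)
    simpa using this
  subst hM0
  rw [Submodule.Quotient.mk_eq_zero]
  have hpsi : psiV 𝔽 i j (0 : Fin 5 →₀ ℕ) = 0 := by simp [psiV]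
  have hkey := key_identity 𝔽 i j (0 : Fin 5 →₀ ℕ)
  rw [hpsi, map_zero, add_zero] at hkey
  have hmdeg : mdeg (0 : Fin 5 →₀ ℕ) = 0 := by simp [mdeg]
  rw [hmdeg] at hkey
  have hnz : ((0 : ℕ) : 𝔽) + 3 ≠ 0 := by
    norm_num
  have hmem : (((0 : ℕ) : 𝔽) + 3) • eA 𝔽 i j 0 ∈ annRels 𝔽 := by
    rw [hkey]
    refine Submodule.sub_mem _ (Submodule.sub_mem _ ?_ ?_) ?_
    · exact Submodule.sum_mem _ fun h _ => relCyc_mem 𝔽 h i j _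
    · exact Submodule.smul_mem _ _ (relSkew_mem 𝔽 i j _)
    · exact Submodule.smul_mem _ _
        (Submodule.sum_mem _ fun h _ => relSkew_mem 𝔽 j h _)
  have := Submodule.smul_mem (annRels 𝔽) (((0 : ℕ) : 𝔽) + 3)⁻¹ hmem
  rw [smul_smul, inv_mul_cancel₀ hnz, one_smul] at this
  exact this

theorem annRE_dim_bounds' (k : ℕ) :
    Module.finrank 𝔽 (annEvenPiece 𝔽 k) ≤ k * (k + 1) * (k + 2) * (k + 4) / 6 ∧
      Module.finrank 𝔽 (annOddPiece 𝔽 k) ≤ k * (k + 2) * (k + 3) * (k + 4) / 6 := by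
  constructor
  · rcases Nat.lt_or_ge k 2 with hk | hk
    · interval_cases k
      · rw [annEven_zero 𝔽]
        simp
      · have h1 := le_trans (even_weak 𝔽 1) (finrank_Wsp_le 𝔽 0)
        norm_num at h1 ⊢
        exact h1
    · obtain ⟨m, rfl⟩ : ∃ m, k = m + 2 := ⟨k - 2, by omega⟩
      have hb := even_bound 𝔽 (m + 2) (by omega)
      rw [show m + 2 + 2 = m + 4 from by omega, show m + 2 + 3 = m + 5 from by omega] at hb
      have := num_even m _ hb
      rw [show (m + 2) * (m + 2 + 1) * (m + 2 + 2) * (m + 2 + 4)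
        = (m + 2) * (m + 3) * (m + 4) * (m + 6) from by ring]
      exact this
  · have hb := odd_bound 𝔽 k
    exact num_odd k _ hb

/-- **Proposition 6.9.** For every `k ≥ 0`,
`dim g(RE(5,10))_{2k-4} ≤ k(k+1)(k+2)(k+4)/6` and
`dim g(RE(5,10))_{2k-3} ≤ k(k+2)(k+3)(k+4)/6`. -/
theorem annRE_dim_bounds (k : ℕ) :
    Module.finrank 𝔽 (annEvenPiece 𝔽 k) ≤ k * (k + 1) * (k + 2) * (k + 4) / 6 ∧
      Module.finrank 𝔽 (annOddPiece 𝔽 k) ≤ k * (k + 2) * (k + 3) * (k + 4) / 6 := by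
  exact annRE_dim_bounds' 𝔽 k
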